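/- Let λ ∈ ℝ with λ ≠ 0 and λ ≠ 1, and let p, q ∈ ℝⁿ have strictly positive entries. The function K ↦ B_λ(p‖K·q) = (1/(λ(λ−1)))·Σᵢ [ pᵢ^λ − λ pᵢ (K qᵢ)^{λ−1} − (1−λ)(K qᵢ)^λ ] on (0,∞) attains its unique global minimum at K₀ = (Σᵢ pᵢ qᵢ^{λ−1}) / (Σᵢ qᵢ^λ), the nominal invariance factor of the Beta divergence. -/

import Mathlib

open Real Finset

/-- Key inequality: for `t > 0`, `t ≠ 1`, the quantity
`((λ-1) t^λ - λ t^{λ-1} + 1) / (λ(λ-1))` is strictly positive. -/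
lemma beta_key_ineq (lam : ℝ) (hl0 : lam ≠ 0) (hl1 : lam ≠ 1) {t : ℝ}
    (ht : 0 < t) (ht1 : t ≠ 1) :
    0 < (1 / (lam * (lam - 1))) * ((lam - 1) * t ^ lam - lam * t ^ (lam - 1) + 1) := by
  have hs : (-1 : ℝ) ≤ t - 1 := by linarith
  have hs' : t - 1 ≠ 0 := sub_ne_zero.mpr ht1
  have h1t : (1 : ℝ) + (t - 1) = t := by ring
  have hT : (0 : ℝ) < t ^ (lam - 1) := Real.rpow_pos_of_pos ht _
  have hS : (0 : ℝ) < t ^ lam := Real.rpow_pos_of_pos ht _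
  have hST : t ^ (lam - 1) * t = t ^ lam := by
    rw [← Real.rpow_add_one ht.ne' (lam - 1)]; ring_nf
  have hTinv : t ^ (lam - 1) * t ^ (1 - lam) = 1 := by
    rw [← Real.rpow_add ht]; norm_num
  rcases lt_trichotomy lam 0 with h | h | h
  · -- λ < 0 : use Bernoulli with exponent 1 - λ > 1
    have hb := one_add_mul_self_lt_rpow_one_add hs hs' (p := 1 - lam) (by linarith)
    rw [h1t] at hb
    have hc : 0 < 1 / (lam * (lam - 1)) := by
      have := mul_pos_of_neg_of_neg h (show lam - 1 < 0 by linarith)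
      positivity
    have hpos : 0 < (lam - 1) * t ^ lam - lam * t ^ (lam - 1) + 1 := by
      have hfac : (lam - 1) * t ^ lam - lam * t ^ (lam - 1) + 1
          = t ^ (lam - 1) * (t ^ (1 - lam) - (1 + (1 - lam) * (t - 1))) := by
        have := hST; have := hTinv; nlinarith [hST, hTinv]
      rw [hfac]
      exact mul_pos hT (by linarith)
    exact mul_pos hc hpos
  · exact absurd h hl0
  · rcases lt_trichotomy lam 1 with h1 | h1 | h1
    · -- 0 < λ < 1 : reversed Bernoulli with exponent 1 - λ ∈ (0,1)
      have hb := rpow_one_add_lt_one_add_mul_self hs hs' (p := 1 - lam)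
        (by linarith) (by linarith)
      rw [h1t] at hb
      have hcneg : 1 / (lam * (lam - 1)) < 0 := by
        have : lam * (lam - 1) < 0 := mul_neg_of_pos_of_neg h (by linarith)
        exact div_neg_of_pos_of_neg one_pos this
      have hneg : (lam - 1) * t ^ lam - lam * t ^ (lam - 1) + 1 < 0 := by
        have hfac : (lam - 1) * t ^ lam - lam * t ^ (lam - 1) + 1
            = t ^ (lam - 1) * (t ^ (1 - lam) - (1 + (1 - lam) * (t - 1))) := by
          nlinarith [hST, hTinv]
        rw [hfac]
        exact mul_neg_of_pos_of_neg hT (by linarith)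
      exact mul_pos_of_neg_of_neg hcneg hneg
    · exact absurd h1 hl1
    · -- λ > 1 : use Bernoulli with exponent λ at u = t⁻¹
      have hu : (0 : ℝ) < t⁻¹ := inv_pos.mpr ht
      have hu1 : t⁻¹ - 1 ≠ 0 := by
        intro hcon
        apply ht1
        have : t⁻¹ = 1 := by linarith
        field_simp at this; linarith
      have hb := one_add_mul_self_lt_rpow_one_add (s := t⁻¹ - 1) (by linarith)
        hu1 (p := lam) h1
      have h1u : (1 : ℝ) + (t⁻¹ - 1) = t⁻¹ := by ring
      rw [h1u] at hb
      have hSu : t ^ lam * t⁻¹ ^ lam = 1 := by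
        rw [Real.inv_rpow ht.le, mul_inv_cancel₀ hS.ne']
      have hSu2 : t ^ lam * t⁻¹ = t ^ (lam - 1) := by
        field_simp [← hST]
        rw [← hST]; ring
      have hc : 0 < 1 / (lam * (lam - 1)) := by
        have : 0 < lam * (lam - 1) := mul_pos h (by linarith)
        positivity
      have hpos : 0 < (lam - 1) * t ^ lam - lam * t ^ (lam - 1) + 1 := by
        have hfac : (lam - 1) * t ^ lam - lam * t ^ (lam - 1) + 1
            = t ^ lam * (t⁻¹ ^ lam - (1 + lam * (t⁻¹ - 1))) := by
          nlinarith [hSu, hSu2]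
        rw [hfac]
        exact mul_pos hS (by linarith)
      exact mul_pos hc hpos

/-- The Beta divergence `B_λ(p‖K·q)` as a function of the scale factor `K`. -/
noncomputable def betaDivK {n : ℕ} (lam : ℝ) (p q : Fin n → ℝ) (K : ℝ) : ℝ :=
  (1 / (lam * (lam - 1))) *
    ∑ i, (p i ^ lam - lam * p i * (K * q i) ^ (lam - 1) - (1 - lam) * (K * q i) ^ lam)

/-- The nominal invariance factor of the Beta divergence. -/
noncomputable def betaK0 {n : ℕ} (lam : ℝ) (p q : Fin n → ℝ) : ℝ :=
  (∑ i, p i * q i ^ (lam - 1)) / ∑ i, q i ^ lam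

/-- for `λ ∉ {0,1}` and positive vectors `p, q`, the function
`K ↦ B_λ(p‖K·q)` on `(0,∞)` attains its unique global minimum at
`K₀ = (∑ pᵢ qᵢ^{λ-1})/(∑ qᵢ^λ)`. -/
theorem statement15 {n : ℕ} (hn : 0 < n) (lam : ℝ) (hl0 : lam ≠ 0) (hl1 : lam ≠ 1)
    (p q : Fin n → ℝ) (hp : ∀ i, 0 < p i) (hq : ∀ i, 0 < q i) :
    0 < betaK0 lam p q ∧
    ∀ K ∈ Set.Ioi (0 : ℝ), K ≠ betaK0 lam p q →
      betaDivK lam p q (betaK0 lam p q) < betaDivK lam p q K := by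
  have hne : Nonempty (Fin n) := Fin.pos_iff_nonempty.mp hn
  set A : ℝ := ∑ i, p i * q i ^ (lam - 1) with hAdef
  set B : ℝ := ∑ i, q i ^ lam with hBdef
  have hA : 0 < A :=
    Finset.sum_pos (fun i _ => mul_pos (hp i) (Real.rpow_pos_of_pos (hq i) _))
      Finset.univ_nonempty
  have hB : 0 < B :=
    Finset.sum_pos (fun i _ => Real.rpow_pos_of_pos (hq i) _) Finset.univ_nonempty
  have hK0eq : betaK0 lam p q = A / B := rfl
  have hK0 : 0 < betaK0 lam p q := by rw [hK0eq]; exact div_pos hA hB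
  refine ⟨hK0, ?_⟩
  set K₀ : ℝ := betaK0 lam p q with hK0def
  have hAeq : A = K₀ * B := by
    rw [hK0eq]; field_simp
  -- expansion of betaDivK for positive K
  have hexp : ∀ K : ℝ, 0 < K → betaDivK lam p q K =
      (1 / (lam * (lam - 1))) *
        ((∑ i, p i ^ lam) - lam * K ^ (lam - 1) * A - (1 - lam) * K ^ lam * B) := by
    intro K hKpos
    unfold betaDivK
    congr 1
    have hterm : ∀ i : Fin n,
        p i ^ lam - lam * p i * (K * q i) ^ (lam - 1) - (1 - lam) * (K * q i) ^ lam
          = p i ^ lam - (lam * K ^ (lam - 1)) * (p i * q i ^ (lam - 1))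
            - ((1 - lam) * K ^ lam) * (q i ^ lam) := by
      intro i
      rw [Real.mul_rpow hKpos.le (hq i).le, Real.mul_rpow hKpos.le (hq i).le]
      ring
    rw [Finset.sum_congr rfl (fun i _ => hterm i), Finset.sum_sub_distrib,
      Finset.sum_sub_distrib, ← Finset.mul_sum, ← Finset.mul_sum, ← hAdef, ← hBdef]
  intro K hKmem hKne
  have hKpos : 0 < K := hKmem
  set t : ℝ := K / K₀ with htdef
  have ht : 0 < t := div_pos hKpos hK0
  have ht1 : t ≠ 1 := by
    intro hcon
    apply hKne
    rw [htdef] at hcon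
    field_simp at hcon
    exact hcon
  have hKt : K = t * K₀ := by rw [htdef]; field_simp
  have hKl : K ^ lam = t ^ lam * K₀ ^ lam := by
    rw [hKt, Real.mul_rpow ht.le hK0.le]
  have hKl1 : K ^ (lam - 1) = t ^ (lam - 1) * K₀ ^ (lam - 1) := by
    rw [hKt, Real.mul_rpow ht.le hK0.le]
  have hK0l : K₀ ^ lam = K₀ ^ (lam - 1) * K₀ := by
    rw [← Real.rpow_add_one hK0.ne' (lam - 1)]; ring_nf
  have hkey := beta_key_ineq lam hl0 hl1 ht ht1
  have hdiff : betaDivK lam p q K - betaDivK lam p q K₀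
      = (B * K₀ ^ lam) *
        ((1 / (lam * (lam - 1))) * ((lam - 1) * t ^ lam - lam * t ^ (lam - 1) + 1)) := by
    rw [hexp K hKpos, hexp K₀ hK0, hKl, hKl1, hAeq, hK0l]
    ring
  have hpos : 0 < betaDivK lam p q K - betaDivK lam p q K₀ := by
    rw [hdiff]
    exact mul_pos (mul_pos hB (Real.rpow_pos_of_pos hK0 _)) hkey
  linarith
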